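/- Consider a network of m RFMIOs with feedback inputs u^i = c^i_0 + Σ_{k=1}^m c^i_k y^k, where c^i_0 > 0 and c^i_k ≥ 0, and let F : ℝ^ℓ → ℝ^ℓ denote its vector field. Then F is a cooperative (Metzler-Jacobian) system on the cube: for every z ∈ [0,1]^ℓ and every pair of distinct indices p ≠ q, the partial derivative ∂F_p/∂z_q evaluated at z is nonnegative. -/

import Mathlib

open scoped BigOperators

/-- Extended occupancy vector of an RFM chain with `N + 1` sites:
the input value `u` at the left boundary, the state in the middle,
and `0` at the right boundary. -/
noncomputable def rfmExt {N : ℕ} (u : ℝ) (x : Fin (N + 1) → ℝ) : Fin (N + 3) → ℝ :=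
  Fin.cons u (Fin.snoc x 0)

/-- The flow into site `j` (so `j = 0` is the entry flow `λ₀ u (1 - x₁)`,
`j` internal is `λ_j x_j (1 - x_{j+1})` in 1-based notation,
and `j = N + 1` is the exit flow `λ_n x_n`). -/
noncomputable def rfmFlow {N : ℕ} (lam : Fin (N + 2) → ℝ) (u : ℝ)
    (x : Fin (N + 1) → ℝ) (j : Fin (N + 2)) : ℝ :=
  lam j * rfmExt u x j.castSucc * (1 - rfmExt u x j.succ)

/-- The vector field of a single RFMIO chain with input `u`. -/
noncomputable def rfmVF {N : ℕ} (lam : Fin (N + 2) → ℝ) (u : ℝ)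
    (x : Fin (N + 1) → ℝ) (j : Fin (N + 1)) : ℝ :=
  rfmFlow lam u x j.castSucc - rfmFlow lam u x j.succ

/-- The steady-state equations of an RFM chain with input `u`: all flows are equal,
i.e. `λ₀ u (1-e₁) = λ₁ e₁ (1-e₂) = ⋯ = λ_n e_n`. -/
def rfmSS {N : ℕ} (lam : Fin (N + 2) → ℝ) (u : ℝ) (e : Fin (N + 1) → ℝ) : Prop :=
  ∀ j : Fin (N + 1), rfmFlow lam u e j.castSucc = rfmFlow lam u e j.succ

/-- The input to RFMIO `i` in the network: `u^i = c^i_0 + ∑_k c^i_k y^k`,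
where `y^k = λ^k_{n^k} x^k_{n^k}` is the output of RFMIO `k`. -/
noncomputable def netInput {m : ℕ} {n : Fin m → ℕ}
    (lam : ∀ i : Fin m, Fin (n i + 2) → ℝ)
    (c0 : Fin m → ℝ) (c : Fin m → Fin m → ℝ)
    (z : ∀ i : Fin m, Fin (n i + 1) → ℝ) (i : Fin m) : ℝ :=
  c0 i + ∑ k : Fin m, c i k * (lam k (Fin.last (n k + 1)) * z k (Fin.last (n k)))

/-- The vector field of the network of `m` RFMIOs with feedback connections. -/
noncomputable def netVF {m : ℕ} {n : Fin m → ℕ}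
    (lam : ∀ i : Fin m, Fin (n i + 2) → ℝ)
    (c0 : Fin m → ℝ) (c : Fin m → Fin m → ℝ)
    (z : ∀ i : Fin m, Fin (n i + 1) → ℝ) : ∀ i : Fin m, Fin (n i + 1) → ℝ :=
  fun i => rfmVF (lam i) (netInput lam c0 c z i) (z i)

/-- The network equilibrium equations. -/
def netSS {m : ℕ} {n : Fin m → ℕ}
    (lam : ∀ i : Fin m, Fin (n i + 2) → ℝ)
    (c0 : Fin m → ℝ) (c : Fin m → Fin m → ℝ)
    (e : ∀ i : Fin m, Fin (n i + 1) → ℝ) : Prop :=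
  ∀ i : Fin m, rfmSS (lam i) (netInput lam c0 c e i) (e i)

/-- The network of `m` RFMIOs with feedback is a cooperative
(Metzler-Jacobian) system on the cube: at every state `z ∈ [0,1]^ℓ`, the partial
derivative of any component `p` of the vector field with respect to any other state
coordinate `q ≠ p` is nonnegative. -/
theorem network_cooperative
    (m : ℕ) (n : Fin m → ℕ)
    (lam : ∀ i : Fin m, Fin (n i + 2) → ℝ)
    (hlam : ∀ (i : Fin m) (j : Fin (n i + 2)), 0 < lam i j)
    (c0 : Fin m → ℝ) (hc0 : ∀ i, 0 < c0 i)
    (c : Fin m → Fin m → ℝ) (hc : ∀ i k, 0 ≤ c i k)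
    (z : ∀ i : Fin m, Fin (n i + 1) → ℝ)
    (hz : ∀ i j, z i j ∈ Set.Icc (0 : ℝ) 1)
    (p q : Σ i : Fin m, Fin (n i + 1)) (hpq : p ≠ q) :
    0 ≤ deriv (fun s : ℝ =>
        netVF lam c0 c
          (fun i j => if (⟨i, j⟩ : Σ i : Fin m, Fin (n i + 1)) = q then s else z i j)
          p.1 p.2)
      (z q.1 q.2) := by
  obtain ⟨i, j⟩ := p
  show 0 ≤ deriv (fun s : ℝ =>
      netVF lam c0 c
        (fun k l => if (⟨k, l⟩ : Σ i : Fin m, Fin (n i + 1)) = q then s else z k l) i j)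
    (z q.1 q.2)
  set s0 : ℝ := z q.1 q.2 with hs0
  have hbase : ∀ (P : Prop) [inst : Decidable P] (a : ℝ),
      HasDerivAt (fun s : ℝ => if P then s else a) (if P then (1:ℝ) else 0) s0 := by
    intro P inst a
    by_cases h : P
    · simpa [h] using hasDerivAt_id' s0
    · simpa [h] using hasDerivAt_const s0 a
  set du : ℝ := ∑ k : Fin m, c i k * (lam k (Fin.last (n k + 1)) *
      (if (⟨k, Fin.last (n k)⟩ : Σ i : Fin m, Fin (n i + 1)) = q then (1:ℝ) else 0)) with hdu
  have hdu0 : 0 ≤ du := by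
    rw [hdu]
    refine Finset.sum_nonneg fun k _ => mul_nonneg (hc i k) (mul_nonneg (hlam k _).le ?_)
    split <;> norm_num
  have hU : HasDerivAt (fun s : ℝ => netInput lam c0 c
      (fun k l => if (⟨k, l⟩ : Σ i : Fin m, Fin (n i + 1)) = q then s else z k l) i) du s0 := by
    rw [hdu]
    simp only [netInput]
    exact (HasDerivAt.fun_sum fun k _ => ((hbase _ _).const_mul _).const_mul _).const_add _
  set g : Fin (n i + 1) → ℝ :=
    fun l => if (⟨i, l⟩ : Σ i : Fin m, Fin (n i + 1)) = q then (1:ℝ) else 0 with hg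
  set D : Fin (n i + 3) → ℝ := Fin.cons du (Fin.snoc g 0) with hD
  have hg0 : ∀ l, 0 ≤ g l := by
    intro l; rw [hg]; dsimp only; split <;> norm_num
  have hDnn : ∀ t, 0 ≤ D t := by
    intro t
    rw [hD]
    refine Fin.cases ?_ ?_ t
    · simpa using hdu0
    · intro t
      simp only [Fin.cons_succ]
      refine Fin.lastCases ?_ ?_ t
      · simp
      · intro k; simpa using hg0 k
  have hE : ∀ t : Fin (n i + 3), HasDerivAt (fun s : ℝ =>
      rfmExt (netInput lam c0 c
          (fun k l => if (⟨k, l⟩ : Σ i : Fin m, Fin (n i + 1)) = q then s else z k l) i)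
        (fun l => if (⟨i, l⟩ : Σ i : Fin m, Fin (n i + 1)) = q then s else z i l) t)
      (D t) s0 := by
    intro t
    rw [hD]
    refine Fin.cases ?_ ?_ t
    · simpa only [rfmExt, Fin.cons_zero] using hU
    · intro t
      simp only [rfmExt, Fin.cons_succ]
      refine Fin.lastCases ?_ ?_ t
      · simpa only [Fin.snoc_last] using hasDerivAt_const s0 (0:ℝ)
      · intro k
        simpa only [Fin.snoc_castSucc, hg] using hbase _ (z i k)
  have hF := (((hE j.castSucc.castSucc).const_mul (lam i j.castSucc)).mul
        ((hE j.castSucc.succ).const_sub 1)).sub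
      (((hE j.succ.castSucc).const_mul (lam i j.succ)).mul
        ((hE j.succ.succ).const_sub 1))
  have h2 : HasDerivAt (fun s : ℝ =>
      netVF lam c0 c
        (fun k l => if (⟨k, l⟩ : Σ i : Fin m, Fin (n i + 1)) = q then s else z k l) i j)
      _ s0 := hF
  rw [h2.deriv]
  have hDt2 : D (j.castSucc.succ) = 0 := by
    rw [hD]
    simp only [Fin.cons_succ, Fin.snoc_castSucc, hg]
    exact if_neg hpq
  have hmidval : rfmExt (netInput lam c0 c
        (fun k l => if (⟨k, l⟩ : Σ i : Fin m, Fin (n i + 1)) = q then s0 else z k l) i)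
      (fun l => if (⟨i, l⟩ : Σ i : Fin m, Fin (n i + 1)) = q then s0 else z i l)
      (j.castSucc.succ) = z i j := by
    simp only [rfmExt, Fin.cons_succ, Fin.snoc_castSucc]
    exact if_neg hpq
  rw [← Fin.succ_castSucc, hDt2, hmidval]
  have hA : 0 ≤ lam i j.castSucc * D j.castSucc.castSucc * (1 - z i j) :=
    mul_nonneg (mul_nonneg (hlam i j.castSucc).le (hDnn _)) (sub_nonneg.2 (hz i j).2)
  have hB : 0 ≤ lam i j.succ * z i j * D j.succ.succ :=
    mul_nonneg (mul_nonneg (hlam i j.succ).le (hz i j).1) (hDnn _)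
  nlinarith [hA, hB]
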